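/- Let 1 ≤ k < n and let 𝒮 be a collection of k-dimensional 𝔽_q-subspaces of 𝔽_q^n such that dim(X ∩ Y) ≤ k − 2 for all distinct X, Y ∈ 𝒮. Define ρ(V) = k − 1 if V ∈ 𝒮 and ρ(V) = min(k, dim V) otherwise. Then (𝔽_q^n, ρ) is a q-matroid of rank k, its circuits are exactly the spaces in 𝒮 together with all (k+1)-dimensional subspaces containing no member of 𝒮, and it is paving. -/
import Mathlib
open Module

lemma exists_sub_of_le_finrank (K : Type*) [Field K] (V : Type*) [AddCommGroup V] [Module K V]
    [FiniteDimensional K V] (C : Submodule K V) (m : ℕ) (hm : m ≤ finrank K C) :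
    ∃ W : Submodule K V, W ≤ C ∧ finrank K W = m := by
  let b := finBasis K C
  let v : Fin m → V := fun i => (b (Fin.castLE hm i) : V)
  have hli : LinearIndependent K v := by
    have h1 : LinearIndependent K (fun i : Fin m => b (Fin.castLE hm i)) :=
      b.linearIndependent.comp _ (Fin.castLE_injective hm)
    exact h1.map' C.subtype (Submodule.ker_subtype C)
  refine ⟨Submodule.span K (Set.range v), ?_, ?_⟩
  · rw [Submodule.span_le]; rintro x ⟨i, rfl⟩; exact (b (Fin.castLE hm i)).2
  · rw [finrank_span_eq_card hli, Fintype.card_fin]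

/-- Let `1 ≤ k < n` and let `𝒮` be a collection of `k`-dimensional
subspaces of `𝔽_q^n` with `dim(X ∩ Y) ≤ k − 2` for distinct `X, Y ∈ 𝒮`. Define
`ρ(V) = k − 1` for `V ∈ 𝒮` and `ρ(V) = min(k, dim V)` otherwise. Then `(𝔽_q^n, ρ)` is a
q-matroid of rank `k`, its circuits are exactly the members of `𝒮` together with the
`(k+1)`-dimensional spaces containing no member of `𝒮`, and it is paving. -/
theorem stmt10 (Fq : Type*) [Field Fq] [Fintype Fq] (n k : ℕ) (hk : 1 ≤ k) (hkn : k < n)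
    (S : Set (Submodule Fq (Fin n → Fq)))
    (hSdim : ∀ X ∈ S, finrank Fq X = k)
    (hSint : ∀ X ∈ S, ∀ Y ∈ S, X ≠ Y → (finrank Fq ↥(X ⊓ Y) : ℤ) ≤ (k : ℤ) - 2)
    (ρ : Submodule Fq (Fin n → Fq) → ℕ)
    (hρS : ∀ V ∈ S, ρ V = k - 1)
    (hρ : ∀ V ∉ S, ρ V = min k (finrank Fq V)) :
    ((∀ V : Submodule Fq (Fin n → Fq), ρ V ≤ finrank Fq V) ∧
     (∀ V W : Submodule Fq (Fin n → Fq), V ≤ W → ρ V ≤ ρ W) ∧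
     (∀ V W : Submodule Fq (Fin n → Fq), ρ (V ⊔ W) + ρ (V ⊓ W) ≤ ρ V + ρ W)) ∧
    ρ ⊤ = k ∧
    (∀ C : Submodule Fq (Fin n → Fq),
      (ρ C < finrank Fq C ∧ ∀ W : Submodule Fq (Fin n → Fq), W < C → ρ W = finrank Fq W) ↔
        (C ∈ S ∨ (finrank Fq C = k + 1 ∧ ∀ X ∈ S, ¬ X ≤ C))) ∧
    (∀ C : Submodule Fq (Fin n → Fq),
      (ρ C < finrank Fq C ∧ ∀ W : Submodule Fq (Fin n → Fq), W < C → ρ W = finrank Fq W) →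
        k ≤ finrank Fq C) := by
  -- basic facts
  have hρle : ∀ V : Submodule Fq (Fin n → Fq), ρ V ≤ min k (finrank Fq V) := by
    intro V
    by_cases h : V ∈ S
    · rw [hρS V h, hSdim V h]; omega
    · rw [hρ V h]
  have R1 : ∀ V : Submodule Fq (Fin n → Fq), ρ V ≤ finrank Fq V := fun V =>
    le_trans (hρle V) (min_le_right _ _)
  have R2 : ∀ V W : Submodule Fq (Fin n → Fq), V ≤ W → ρ V ≤ ρ W := by
    intro V W hVW
    by_cases hV : V ∈ S <;> by_cases hW : W ∈ S
    · rw [hρS V hV, hρS W hW]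
    · have h1 : k ≤ finrank Fq W := (hSdim V hV) ▸ Submodule.finrank_mono hVW
      rw [hρS V hV, hρ W hW]; omega
    · have hne : V ≠ W := fun h => hV (h ▸ hW)
      have hlt := Submodule.finrank_lt_finrank_of_lt (lt_of_le_of_ne hVW hne)
      have hWk := hSdim W hW
      rw [hρ V hV, hρS W hW]
      omega
    · rw [hρ V hV, hρ W hW]
      exact min_le_min le_rfl (Submodule.finrank_mono hVW)
  have R3 : ∀ V W : Submodule Fq (Fin n → Fq), ρ (V ⊔ W) + ρ (V ⊓ W) ≤ ρ V + ρ W := by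
    intro V W
    have hdim := Submodule.finrank_sup_add_finrank_inf_eq V W
    have hJ := hρle (V ⊔ W)
    have hM := hρle (V ⊓ W)
    have hbc : finrank Fq ↥(V ⊓ W) ≤ finrank Fq V := Submodule.finrank_mono inf_le_left
    have hbd : finrank Fq ↥(V ⊓ W) ≤ finrank Fq W := Submodule.finrank_mono inf_le_right
    by_cases hV : V ∈ S <;> by_cases hW : W ∈ S
    · by_cases hVW : V = W
      · subst hVW; rw [sup_idem, inf_idem]
      · have hint := hSint V hV W hW hVW
        have hVk := hSdim V hV
        have hWk := hSdim W hW
        rw [hρS V hV, hρS W hW]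
        omega
    · -- V ∈ S, W ∉ S
      have hVk := hSdim V hV
      by_cases hle : V ≤ W
      · rw [sup_eq_right.2 hle, inf_eq_left.2 hle]; omega
      · by_cases hle2 : W ≤ V
        · rw [sup_eq_left.2 hle2, inf_eq_right.2 hle2]
        · have hMV : V ⊓ W < V := lt_of_le_of_ne inf_le_left (by
            intro h; exact hle (by rw [← h]; exact inf_le_right))
          have hMW : V ⊓ W < W := lt_of_le_of_ne inf_le_right (by
            intro h; exact hle2 (by rw [← h]; exact inf_le_left))
          have h1 := Submodule.finrank_lt_finrank_of_lt hMV
          have h2 := Submodule.finrank_lt_finrank_of_lt hMW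
          have hMS : V ⊓ W ∉ S := fun h => by
            have := hSdim _ h; omega
          rw [hρS V hV, hρ _ hW, hρ _ hMS]
          by_cases hJS : V ⊔ W ∈ S
          · rw [hρS _ hJS]; omega
          · rw [hρ _ hJS]; omega
    · -- W ∈ S, V ∉ S (symmetric)
      have hWk := hSdim W hW
      by_cases hle : W ≤ V
      · rw [sup_eq_left.2 hle, inf_eq_right.2 hle]
      · by_cases hle2 : V ≤ W
        · rw [sup_eq_right.2 hle2, inf_eq_left.2 hle2]; omega
        · have hMV : V ⊓ W < V := lt_of_le_of_ne inf_le_left (by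
            intro h; exact hle2 (by rw [← h]; exact inf_le_right))
          have hMW : V ⊓ W < W := lt_of_le_of_ne inf_le_right (by
            intro h; exact hle (by rw [← h]; exact inf_le_left))
          have h1 := Submodule.finrank_lt_finrank_of_lt hMV
          have h2 := Submodule.finrank_lt_finrank_of_lt hMW
          have hMS : V ⊓ W ∉ S := fun h => by
            have := hSdim _ h; omega
          rw [hρS W hW, hρ _ hV, hρ _ hMS]
          by_cases hJS : V ⊔ W ∈ S
          · rw [hρS _ hJS]; omega
          · rw [hρ _ hJS]; omega
    · rw [hρ V hV, hρ W hW]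
      by_cases hJS : V ⊔ W ∈ S <;> by_cases hMS : V ⊓ W ∈ S
      · have := hSdim _ hJS; have := hSdim _ hMS
        rw [hρS _ hJS, hρS _ hMS]; omega
      · have := hSdim _ hJS
        rw [hρS _ hJS, hρ _ hMS]; omega
      · have := hSdim _ hMS
        rw [hρ _ hJS, hρS _ hMS]; omega
      · rw [hρ _ hJS, hρ _ hMS]; omega
  have htopd : finrank Fq (⊤ : Submodule Fq (Fin n → Fq)) = n := by
    rw [finrank_top]; exact Module.finrank_fin_fun Fq
  have htopS : (⊤ : Submodule Fq (Fin n → Fq)) ∉ S := fun h => by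
    have := hSdim _ h; omega
  have hrk : ρ ⊤ = k := by rw [hρ _ htopS, htopd]; omega
  -- circuits characterization
  have hcirc : ∀ C : Submodule Fq (Fin n → Fq),
      (ρ C < finrank Fq C ∧ ∀ W : Submodule Fq (Fin n → Fq), W < C → ρ W = finrank Fq W) ↔
        (C ∈ S ∨ (finrank Fq C = k + 1 ∧ ∀ X ∈ S, ¬ X ≤ C)) := by
    intro C
    constructor
    · rintro ⟨hdep, hind⟩
      by_cases hC : C ∈ S
      · exact Or.inl hC
      · right
        rw [hρ C hC] at hdep
        have hk1 : k + 1 ≤ finrank Fq C := by omega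
        have hCd : finrank Fq C = k + 1 := by
          by_contra h
          obtain ⟨W, hWC, hWd⟩ := exists_sub_of_le_finrank Fq _ C (k + 1) hk1
          have hWlt : W < C := lt_of_le_of_ne hWC (by
            rintro rfl; omega)
          have hWS : W ∉ S := fun hw => by have := hSdim _ hw; omega
          have := hind W hWlt
          rw [hρ W hWS, hWd] at this
          omega
        refine ⟨hCd, fun X hX hXC => ?_⟩
        have hXd := hSdim X hX
        have hXlt : X < C := lt_of_le_of_ne hXC (fun h => hC (h ▸ hX))
        have := hind X hXlt
        rw [hρS X hX, hXd] at this
        omega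
    · rintro (hC | ⟨hCd, hCS⟩)
      · have hCd := hSdim C hC
        refine ⟨by rw [hρS C hC, hCd]; omega, fun W hW => ?_⟩
        have hWd := Submodule.finrank_lt_finrank_of_lt hW
        have hWS : W ∉ S := fun hw => by have := hSdim _ hw; omega
        rw [hρ W hWS]; omega
      · have hC : C ∉ S := fun h => by have := hSdim _ h; omega
        refine ⟨by rw [hρ C hC, hCd]; omega, fun W hW => ?_⟩
        have hWd := Submodule.finrank_lt_finrank_of_lt hW
        have hWS : W ∉ S := by
          intro hw
          exact hCS W hw hW.le
        rw [hρ W hWS]; omega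
  refine ⟨⟨R1, R2, R3⟩, hrk, hcirc, fun C hC => ?_⟩
  rcases (hcirc C).1 hC with h | ⟨h, _⟩
  · rw [hSdim C h]
  · omega
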